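/- Each of the six points (1:0:0:0), (0:1:0:0), (0:0:1:0), (0:0:0:1), (1:1:1:1), (1:0:1:0) is a singular point of the quartic surface Z8 in P^3 defined by y1 y2^2 y3 - y1^2 y2 y4 + y1 y2^2 y4 + y1^2 y3 y4 - 2 y1 y2 y3 y4 - y1 y3^2 y4 + y1 y3 y4^2 - y2 y3 y4^2 + y3^2 y4^2 = 0. -/
import Mathlib


open MvPolynomial

/-- The defining quartic of the surface `Z₈` in `ℙ³`. -/
noncomputable def Z8 : MvPolynomial (Fin 4) ℂ :=
  X 0 * X 1 ^ 2 * X 2 - X 0 ^ 2 * X 1 * X 3 + X 0 * X 1 ^ 2 * X 3 + X 0 ^ 2 * X 2 * X 3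
    - 2 * X 0 * X 1 * X 2 * X 3 - X 0 * X 2 ^ 2 * X 3 + X 0 * X 2 * X 3 ^ 2
    - X 1 * X 2 * X 3 ^ 2 + X 2 ^ 2 * X 3 ^ 2
/-- The six singular points of `Z₈`. -/
def Z8sing : Fin 6 → Fin 4 → ℂ :=
  ![![1, 0, 0, 0], ![0, 1, 0, 0], ![0, 0, 1, 0], ![0, 0, 0, 1], ![1, 1, 1, 1], ![1, 0, 1, 0]]

lemma pd_two (i : Fin 4) : pderiv i (2 : MvPolynomial (Fin 4) ℂ) = 0 := by
  rw [show (2 : MvPolynomial (Fin 4) ℂ) = C 2 from (map_ofNat C 2).symm]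
  exact pderiv_C

set_option maxHeartbeats 1000000 in
lemma Z8_pd0 : pderiv (0 : Fin 4) Z8 =
    X 1 ^ 2 * X 2 - 2 * X 0 * X 1 * X 3 + X 1 ^ 2 * X 3 + 2 * X 0 * X 2 * X 3
      - 2 * X 1 * X 2 * X 3 - X 2 ^ 2 * X 3 + X 2 * X 3 ^ 2 := by
  simp [Z8, pderiv_mul, pderiv_X, pd_two, Pi.single_apply]; ring

set_option maxHeartbeats 1000000 in
lemma Z8_pd1 : pderiv (1 : Fin 4) Z8 =
    2 * X 0 * X 1 * X 2 - X 0 ^ 2 * X 3 + 2 * X 0 * X 1 * X 3 - 2 * X 0 * X 2 * X 3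
      - X 2 * X 3 ^ 2 := by
  simp [Z8, pderiv_mul, pderiv_X, pd_two, Pi.single_apply]; ring

set_option maxHeartbeats 1000000 in
lemma Z8_pd2 : pderiv (2 : Fin 4) Z8 =
    X 0 * X 1 ^ 2 + X 0 ^ 2 * X 3 - 2 * X 0 * X 1 * X 3 - 2 * X 0 * X 2 * X 3
      + X 0 * X 3 ^ 2 - X 1 * X 3 ^ 2 + 2 * X 2 * X 3 ^ 2 := by
  simp [Z8, pderiv_mul, pderiv_X, pd_two, Pi.single_apply]; ring

set_option maxHeartbeats 1000000 in
lemma Z8_pd3 : pderiv (3 : Fin 4) Z8 =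
    -(X 0 ^ 2 * X 1) + X 0 * X 1 ^ 2 + X 0 ^ 2 * X 2 - 2 * X 0 * X 1 * X 2
      - X 0 * X 2 ^ 2 + 2 * X 0 * X 2 * X 3 - 2 * X 1 * X 2 * X 3 + 2 * X 2 ^ 2 * X 3 := by
  simp [Z8, pderiv_mul, pderiv_X, pd_two, Pi.single_apply]; ring

/-- Each of the six points is a singular point of the quartic surface `Z₈`: the quartic and
all four of its partial derivatives vanish there. -/
theorem Z8_six_singular_points :
    ∀ j : Fin 6, eval (Z8sing j) Z8 = 0 ∧ ∀ i : Fin 4, eval (Z8sing j) (pderiv i Z8) = 0 := by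
  have h0 : Z8sing 0 = ![1, 0, 0, 0] := rfl
  have h1 : Z8sing 1 = ![0, 1, 0, 0] := rfl
  have h2 : Z8sing 2 = ![0, 0, 1, 0] := rfl
  have h3 : Z8sing 3 = ![0, 0, 0, 1] := rfl
  have h4 : Z8sing 4 = ![1, 1, 1, 1] := rfl
  have h5 : Z8sing 5 = ![1, 0, 1, 0] := rfl
  have hd0 : ∀ j : Fin 6, eval (Z8sing j) (pderiv (0 : Fin 4) Z8) = 0 := by
    intro j; rw [Z8_pd0]; fin_cases j <;>
      simp [h0, h1, h2, h3, h4, h5, Matrix.cons_val_zero, Matrix.cons_val_one,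
        Matrix.head_cons, Matrix.cons_val_two, Matrix.tail_cons, Matrix.cons_val_three] <;> ring_nf
  have hd1 : ∀ j : Fin 6, eval (Z8sing j) (pderiv (1 : Fin 4) Z8) = 0 := by
    intro j; rw [Z8_pd1]; fin_cases j <;>
      simp [h0, h1, h2, h3, h4, h5, Matrix.cons_val_zero, Matrix.cons_val_one,
        Matrix.head_cons, Matrix.cons_val_two, Matrix.tail_cons, Matrix.cons_val_three] <;> ring_nf
  have hd2 : ∀ j : Fin 6, eval (Z8sing j) (pderiv (2 : Fin 4) Z8) = 0 := by
    intro j; rw [Z8_pd2]; fin_cases j <;>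
      simp [h0, h1, h2, h3, h4, h5, Matrix.cons_val_zero, Matrix.cons_val_one,
        Matrix.head_cons, Matrix.cons_val_two, Matrix.tail_cons, Matrix.cons_val_three] <;> ring_nf
  have hd3 : ∀ j : Fin 6, eval (Z8sing j) (pderiv (3 : Fin 4) Z8) = 0 := by
    intro j; rw [Z8_pd3]; fin_cases j <;>
      simp [h0, h1, h2, h3, h4, h5, Matrix.cons_val_zero, Matrix.cons_val_one,
        Matrix.head_cons, Matrix.cons_val_two, Matrix.tail_cons, Matrix.cons_val_three] <;> ring_nf
  intro j
  constructor
  · fin_cases j <;>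
      simp [Z8, h0, h1, h2, h3, h4, h5, Matrix.cons_val_zero, Matrix.cons_val_one,
        Matrix.head_cons, Matrix.cons_val_two, Matrix.tail_cons, Matrix.cons_val_three] <;> ring
  · intro i
    fin_cases i
    · exact hd0 j
    · exact hd1 j
    · exact hd2 j
    · exact hd3 j
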